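/- Let f : ℝⁿ → ℝ be a polynomial function whose infimum f* = inf_{x ∈ ℝⁿ} f(x) is finite. Then f* belongs to K(f) ∩ ℝ, where K(f) = K_0(f) ∪ K_∞(f) is the set of generalized critical values of f: either f* is a critical value of f, or f* is an asymptotic critical value, i.e., there is a sequence x_ℓ with ‖x_ℓ‖ → ∞, ‖x_ℓ‖·‖∇f(x_ℓ)‖ → 0, and f(x_ℓ) → f*. -/

import Mathlib

open MvPolynomial Filter

/-- Euclidean norm of a point of `ℝⁿ`. -/
noncomputable def eNorm {n : ℕ} (x : Fin n → ℝ) : ℝ :=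
  Real.sqrt (∑ i, (x i) ^ 2)

/-- Gradient of a real polynomial function at a point. -/
noncomputable def polyGrad {n : ℕ} (f : MvPolynomial (Fin n) ℝ)
    (x : Fin n → ℝ) : Fin n → ℝ :=
  fun i => eval x (pderiv i f)

lemma abs_le_sqrt_sum {n : ℕ} (y : Fin n → ℝ) (i : Fin n) :
    |y i| ≤ Real.sqrt (∑ j, (y j) ^ 2) := by
  rw [← Real.sqrt_sq_eq_abs]
  exact Real.sqrt_le_sqrt (Finset.single_le_sum (f := fun j => (y j) ^ 2)
    (fun j _ => sq_nonneg _) (Finset.mem_univ i))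

lemma norm_le_sqrt_sum {n : ℕ} (y : Fin n → ℝ) :
    ‖y‖ ≤ Real.sqrt (∑ j, (y j) ^ 2) := by
  refine (pi_norm_le_iff_of_nonneg (Real.sqrt_nonneg _)).2 fun i => ?_
  rw [Real.norm_eq_abs]
  exact abs_le_sqrt_sum y i

lemma sum_update_sq {n : ℕ} (x : Fin n → ℝ) (i : Fin n) (s : ℝ) :
    (∑ j, (Function.update x i s j) ^ 2)
      = s ^ 2 + ∑ j ∈ Finset.univ.erase i, (x j) ^ 2 := by
  have h : ∀ j, (Function.update x i s j) ^ 2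
      = Function.update (fun j => (x j) ^ 2) i (s ^ 2) j := by
    intro j
    rcases eq_or_ne j i with rfl | hne
    · simp
    · simp [Function.update_of_ne hne]
  rw [Finset.sum_congr rfl fun j _ => h j, Finset.sum_update_of_mem (Finset.mem_univ i)]
  congr 1
  rw [Finset.sdiff_singleton_eq_erase]

lemma hasDerivAt_eval_update {n : ℕ} (f : MvPolynomial (Fin n) ℝ) (x : Fin n → ℝ) (i : Fin n)
    (t : ℝ) :
    HasDerivAt (fun s => eval (Function.update x i s) f)
      (eval (Function.update x i t) (pderiv i f)) t := by
  induction f using MvPolynomial.induction_on with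
  | C a => simpa only [eval_C, pderiv_C, map_zero] using hasDerivAt_const t (a : ℝ)
  | add p q hp hq => have h := hp.add hq; simp only [map_add]; exact h
  | mul_X p j hp =>
      rcases eq_or_ne j i with rfl | hne
      · have h : HasDerivAt (fun s => eval (Function.update x j s) p * id s) _ t :=
            hp.mul (hasDerivAt_id t)
        simp only [map_mul, eval_X, pderiv_mul, pderiv_X_self, map_add, map_one, mul_one]
        convert h using 1 <;>
          simp only [Function.update_self, id_eq, mul_one]
      · have h := hp.mul_const (x j)
        simp only [map_mul, eval_X, pderiv_mul, pderiv_X_of_ne hne, map_add, map_zero, mul_zero,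
          add_zero, Function.update_of_ne hne]
        convert h using 1

/-- If `f : ℝⁿ → ℝ` is a polynomial function whose infimum
`f* = inf_{x ∈ ℝⁿ} f(x)` is finite, then `f*` is a generalized critical value:
either `f*` is a critical value of `f`, or `f*` is an asymptotic critical
value, i.e., there is a sequence `x_ℓ` with `‖x_ℓ‖ → ∞`,
`‖x_ℓ‖·‖∇f(x_ℓ)‖ → 0` and `f(x_ℓ) → f*`. -/
theorem infimum_in_generalized_critical_values (n : ℕ)
    (f : MvPolynomial (Fin n) ℝ) (fstar : ℝ)
    (hinf : IsGLB (Set.range fun x : Fin n → ℝ => eval x f) fstar) :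
    (∃ x : Fin n → ℝ, (∀ i, eval x (pderiv i f) = 0) ∧ eval x f = fstar) ∨
    (∃ x : ℕ → (Fin n → ℝ),
      Tendsto (fun ℓ => eNorm (x ℓ)) atTop atTop ∧
      Tendsto (fun ℓ => eNorm (x ℓ) * eNorm (polyGrad f (x ℓ))) atTop (nhds 0) ∧
      Tendsto (fun ℓ => eval (x ℓ) f) atTop (nhds fstar)) := by
  classical
  -- the auxiliary penalty parameter
  set ε : ℕ → ℝ := fun ℓ => 1 / (ℓ + 1) with hε
  have hεpos : ∀ ℓ, 0 < ε ℓ := fun ℓ => by positivity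
  have hε0 : Tendsto ε atTop (nhds 0) := tendsto_one_div_add_atTop_nhds_zero_nat
  -- notation for the squared Euclidean norm
  set S : (Fin n → ℝ) → ℝ := fun y => ∑ i, (y i) ^ 2 with hSdef
  have hSnn : ∀ y, 0 ≤ S y := fun y => Finset.sum_nonneg fun i _ => sq_nonneg _
  -- the penalized function
  set g : ℕ → (Fin n → ℝ) → ℝ := fun ℓ y => eval y f + ε ℓ * Real.log (1 + S y) with hg
  have hlognn : ∀ y, 0 ≤ Real.log (1 + S y) := fun y =>
    Real.log_nonneg (by linarith [hSnn y])
  have hgc : ∀ ℓ, Continuous (g ℓ) := by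
    intro ℓ
    refine (f.continuous_eval).add (continuous_const.mul ?_)
    refine Continuous.log ?_ fun y => by positivity
    exact continuous_const.add (continuous_finset_sum _ fun i _ => (continuous_apply i).pow 2)
  have hco : ∀ ℓ, Tendsto (g ℓ) (cocompact _) atTop := by
    intro ℓ
    have h1 : Tendsto (fun r : ℝ => fstar + ε ℓ * Real.log (1 + r ^ 2)) atTop atTop := by
      have hr : Tendsto (fun r : ℝ => 1 + r ^ 2) atTop atTop :=
        tendsto_atTop_add_const_left _ 1 (tendsto_pow_atTop two_ne_zero)
      have := (Real.tendsto_log_atTop.comp hr).const_mul_atTop (hεpos ℓ)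
      exact tendsto_atTop_add_const_left _ fstar this
    have h2 := h1.comp (tendsto_norm_cocompact_atTop (E := Fin n → ℝ))
    refine tendsto_atTop_mono (fun y => ?_) h2
    have hy1 : fstar ≤ eval y f := hinf.1 ⟨y, rfl⟩
    have hy2 : ‖y‖ ^ 2 ≤ S y := by
      have h := norm_le_sqrt_sum y
      calc ‖y‖ ^ 2 ≤ Real.sqrt (S y) ^ 2 := by
            exact pow_le_pow_left₀ (norm_nonneg _) h 2
        _ = S y := Real.sq_sqrt (hSnn y)
    have hlog : Real.log (1 + ‖y‖ ^ 2) ≤ Real.log (1 + S y) := by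
      apply Real.log_le_log (by positivity); linarith
    simp only [Function.comp_apply]
    exact add_le_add hy1 (mul_le_mul_of_nonneg_left hlog (hεpos ℓ).le)
  -- choose minimizers
  have hmin : ∀ ℓ, ∃ x, ∀ y, g ℓ x ≤ g ℓ y := fun ℓ => (hgc ℓ).exists_forall_le (hco ℓ)
  choose x hx using hmin
  -- the gradient identity at each minimizer
  have hgrad : ∀ ℓ i, eval (x ℓ) (pderiv i f)
      = -(2 * ε ℓ / (1 + S (x ℓ))) * (x ℓ) i := by
    intro ℓ i
    set c : ℝ := ∑ j ∈ Finset.univ.erase i, ((x ℓ) j) ^ 2 with hc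
    have hsum : ∀ s : ℝ, S (Function.update (x ℓ) i s) = s ^ 2 + c :=
      fun s => sum_update_sq (x ℓ) i s
    have hS : S (x ℓ) = (x ℓ i) ^ 2 + c := by
      have := hsum (x ℓ i); rwa [Function.update_eq_self] at this
    have hcnn : 0 ≤ c := Finset.sum_nonneg fun j _ => sq_nonneg _
    have hpos : 0 < 1 + ((x ℓ i) ^ 2 + c) := by positivity
    have hd1 : HasDerivAt (fun s => eval (Function.update (x ℓ) i s) f)
        (eval (x ℓ) (pderiv i f)) (x ℓ i) := by
      simpa [Function.update_eq_self] using hasDerivAt_eval_update f (x ℓ) i (x ℓ i)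
    have hinner : HasDerivAt (fun s : ℝ => 1 + (s ^ 2 + c)) (2 * (x ℓ i)) (x ℓ i) := by
      simpa using (((hasDerivAt_pow 2 (x ℓ i)).add_const c).const_add 1)
    have hd2 : HasDerivAt (fun s : ℝ => ε ℓ * Real.log (1 + (s ^ 2 + c)))
        (ε ℓ * (2 * (x ℓ i) / (1 + ((x ℓ i) ^ 2 + c)))) (x ℓ i) :=
      (hinner.log hpos.ne').const_mul (ε ℓ)
    have hcomp : HasDerivAt (fun s => g ℓ (Function.update (x ℓ) i s))
        (eval (x ℓ) (pderiv i f) + ε ℓ * (2 * (x ℓ i) / (1 + ((x ℓ i) ^ 2 + c))))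
        (x ℓ i) := by
      have heq : (fun s => g ℓ (Function.update (x ℓ) i s))
          = fun s => eval (Function.update (x ℓ) i s) f + ε ℓ * Real.log (1 + (s ^ 2 + c)) := by
        funext s; simp only [hg]; rw [hsum s]
      rw [heq]
      exact hd1.add hd2
    have hloc : IsLocalMin (fun s => g ℓ (Function.update (x ℓ) i s)) (x ℓ i) := by
      refine Filter.Eventually.of_forall fun s => ?_
      simp only [Function.update_eq_self]
      exact hx ℓ _
    have hzero := hloc.hasDerivAt_eq_zero hcomp
    rw [hS]
    have hne : (1 : ℝ) + ((x ℓ i) ^ 2 + c) ≠ 0 := hpos.ne'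
    field_simp at hzero ⊢
    linarith
  -- the value convergence
  have hlb : ∀ ℓ, fstar ≤ eval (x ℓ) f := fun ℓ => hinf.1 ⟨x ℓ, rfl⟩
  have hB : Tendsto (fun ℓ => eval (x ℓ) f) atTop (nhds fstar) := by
    refine tendsto_order.2 ⟨fun a ha => Eventually.of_forall fun ℓ => lt_of_lt_of_le ha (hlb ℓ), ?_⟩
    intro b hb
    -- find a near-optimal point
    have hmid : fstar < (fstar + b) / 2 := by linarith
    obtain ⟨v, hvmem, hvlt⟩ : ∃ v ∈ Set.range fun y : Fin n → ℝ => eval y f, v < (fstar + b) / 2 := by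
      by_contra hcon
      push_neg at hcon
      exact absurd (hinf.2 fun v hv => hcon v hv) (not_le.2 hmid)
    obtain ⟨y, rfl⟩ := hvmem
    have hlim : Tendsto (fun ℓ => eval y f + ε ℓ * Real.log (1 + S y)) atTop
        (nhds (eval y f)) := by
      have h := (hε0.mul_const (Real.log (1 + S y))).const_add (eval y f)
      rw [zero_mul, add_zero] at h
      exact h
    have hev : ∀ᶠ ℓ in atTop, eval y f + ε ℓ * Real.log (1 + S y) < b :=
      hlim.eventually_lt_const (by linarith)
    refine hev.mono fun ℓ hℓ => lt_of_le_of_lt ?_ hℓ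
    calc eval (x ℓ) f ≤ g ℓ (x ℓ) := le_add_of_nonneg_right (mul_nonneg (hεpos ℓ).le (hlognn _))
      _ ≤ g ℓ y := hx ℓ y
  -- the product convergence
  have hC : Tendsto (fun ℓ => eNorm (x ℓ) * eNorm (polyGrad f (x ℓ))) atTop (nhds 0) := by
    have hkey : ∀ ℓ, eNorm (x ℓ) * eNorm (polyGrad f (x ℓ))
        = (2 * ε ℓ / (1 + S (x ℓ))) * S (x ℓ) := by
      intro ℓ
      set k : ℝ := 2 * ε ℓ / (1 + S (x ℓ)) with hk
      have hknn : 0 ≤ k := by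
        have := hSnn (x ℓ); positivity
      have h1 : eNorm (polyGrad f (x ℓ)) = k * Real.sqrt (S (x ℓ)) := by
        have : ∀ i, (polyGrad f (x ℓ) i) ^ 2 = k ^ 2 * ((x ℓ i) ^ 2) := by
          intro i; rw [polyGrad, hgrad ℓ i]; ring
        rw [eNorm, Finset.sum_congr rfl fun i _ => this i, ← Finset.mul_sum,
          Real.sqrt_mul (sq_nonneg k), Real.sqrt_sq hknn]
      rw [h1, eNorm]
      rw [← mul_assoc, mul_comm (Real.sqrt _) k, mul_assoc, Real.mul_self_sqrt (hSnn _)]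
    have hub : ∀ ℓ, (2 * ε ℓ / (1 + S (x ℓ))) * S (x ℓ) ≤ 2 * ε ℓ := by
      intro ℓ
      have h1 : 0 < 1 + S (x ℓ) := by have := hSnn (x ℓ); linarith
      rw [div_mul_eq_mul_div, div_le_iff₀ h1]
      have := hSnn (x ℓ)
      nlinarith [hεpos ℓ]
    have hlbp : ∀ ℓ, 0 ≤ (2 * ε ℓ / (1 + S (x ℓ))) * S (x ℓ) := by
      intro ℓ
      have h0 := hSnn (x ℓ)
      have := (hεpos ℓ).le
      positivity
    have h2ε : Tendsto (fun ℓ => 2 * ε ℓ) atTop (nhds 0) := by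
      have h := hε0.const_mul 2
      rw [mul_zero] at h
      exact h
    have := tendsto_of_tendsto_of_tendsto_of_le_of_le tendsto_const_nhds h2ε hlbp hub
    simpa [hkey] using this
  by_cases hT : Tendsto (fun ℓ => eNorm (x ℓ)) atTop atTop
  · exact Or.inr ⟨x, hT, hC, hB⟩
  · left
    rw [tendsto_atTop] at hT
    push_neg at hT
    obtain ⟨b, hb⟩ := hT
    replace hb : ∃ᶠ ℓ in atTop, ¬ b ≤ eNorm (x ℓ) := hb.mono fun ℓ h => not_le.2 h
    obtain ⟨φ, hφmono, hφ⟩ :=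
      extraction_of_frequently_atTop (hb.mono fun ℓ h => not_le.1 h)
    have hbpos : 0 ≤ b := le_of_lt (lt_of_le_of_lt (Real.sqrt_nonneg _) (hφ 0))
    have hbd : ∀ ℓ, x (φ ℓ) ∈ Metric.closedBall (0 : Fin n → ℝ) b := fun ℓ => by
      rw [Metric.mem_closedBall, dist_zero_right]
      exact (norm_le_sqrt_sum _).trans (hφ ℓ).le
    obtain ⟨x₀, -, ψ, hψmono, hψ⟩ :=
      tendsto_subseq_of_bounded Metric.isBounded_closedBall hbd
    have hθ : Tendsto (fun ℓ => φ (ψ ℓ)) atTop atTop :=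
      (hφmono.comp hψmono).tendsto_atTop
    refine ⟨x₀, fun i => ?_, ?_⟩
    · have h1 : Tendsto (fun ℓ => eval (x (φ (ψ ℓ))) (pderiv i f)) atTop
          (nhds (eval x₀ (pderiv i f))) := ((pderiv i f).continuous_eval.tendsto x₀).comp hψ
      have h2 : Tendsto (fun ℓ => eval (x (φ (ψ ℓ))) (pderiv i f)) atTop (nhds 0) := by
        refine squeeze_zero_norm (a := fun ℓ => 2 * ε (φ (ψ ℓ)) * b) (fun ℓ => ?_) ?_
        · set m := φ (ψ ℓ)
          rw [hgrad m i, Real.norm_eq_abs, abs_mul, abs_neg, abs_div]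
          have hS0 := hSnn (x m)
          have habs : |x m i| ≤ b := by
            refine (abs_le_sqrt_sum (x m) i).trans ?_
            exact (hφ (ψ ℓ)).le
          have hd : |2 * ε m| / |1 + S (x m)| ≤ 2 * ε m := by
            rw [abs_of_nonneg (by positivity : (0:ℝ) ≤ 2 * ε m),
              abs_of_nonneg (by linarith : (0:ℝ) ≤ 1 + S (x m))]
            apply div_le_self (by positivity) (by linarith)
          exact mul_le_mul hd habs (abs_nonneg _) (by positivity)
        · have : Tendsto (fun ℓ => ε (φ (ψ ℓ))) atTop (nhds 0) := hε0.comp hθ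
          have h := (this.const_mul 2).mul_const b
          rw [mul_zero, zero_mul] at h
          exact h
      exact tendsto_nhds_unique h1 h2
    · have h1 : Tendsto (fun ℓ => eval (x (φ (ψ ℓ))) f) atTop (nhds (eval x₀ f)) :=
        (f.continuous_eval.tendsto x₀).comp hψ
      have h2 : Tendsto (fun ℓ => eval (x (φ (ψ ℓ))) f) atTop (nhds fstar) := hB.comp hθ
      exact tendsto_nhds_unique h1 h2
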